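/- Let E, F, G be Hilbert spaces and let T : E → F and S : F → G be continuous linear operators such that T and S each have finite-dimensional kernel and closed image of finite codimension. Then the composition S ∘ T : E → G has finite-dimensional kernel and closed image of finite codimension, and its index satisfies ind(S ∘ T) = ind(S) + ind(T). -/

import Mathlib

open Module

lemma fin_of_sub_quot {V : Type*} [AddCommGroup V] [Module ℝ V]
    (p : Submodule ℝ V) (h1 : FiniteDimensional ℝ p) (h2 : FiniteDimensional ℝ (V ⧸ p)) :
    FiniteDimensional ℝ V := by
  rw [FiniteDimensional, Module.finite_def]
  apply Submodule.fg_of_fg_map_of_fg_inf_ker p.mkQ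
  · rw [Submodule.map_top, Submodule.range_mkQ, ← Module.finite_def]
    exact h2
  · rw [Submodule.ker_mkQ, top_inf_eq, ← Module.Finite.iff_fg]
    exact h1

set_option maxHeartbeats 1000000 in
/-- If `T : E →L F` and `S : F →L G` are Fredholm operators between Hilbert spaces
(finite-dimensional kernel and closed image of finite codimension), then so is `S ∘ T`,
and `ind (S ∘ T) = ind S + ind T`, where
`ind T = dim ker T − dim coker T`. -/
theorem fredholm_comp_index
    {E F G : Type*}
    [NormedAddCommGroup E] [InnerProductSpace ℝ E] [CompleteSpace E]
    [NormedAddCommGroup F] [InnerProductSpace ℝ F] [CompleteSpace F]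
    [NormedAddCommGroup G] [InnerProductSpace ℝ G] [CompleteSpace G]
    (T : E →L[ℝ] F) (S : F →L[ℝ] G)
    (hTker : FiniteDimensional ℝ (LinearMap.ker (T : E →ₗ[ℝ] F)))
    (hTclosed : IsClosed (Set.range T))
    (hTcoker : FiniteDimensional ℝ (F ⧸ LinearMap.range (T : E →ₗ[ℝ] F)))
    (hSker : FiniteDimensional ℝ (LinearMap.ker (S : F →ₗ[ℝ] G)))
    (hSclosed : IsClosed (Set.range S))
    (hScoker : FiniteDimensional ℝ (G ⧸ LinearMap.range (S : F →ₗ[ℝ] G))) :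
    FiniteDimensional ℝ (LinearMap.ker ((S.comp T : E →L[ℝ] G) : E →ₗ[ℝ] G)) ∧
    IsClosed (Set.range (S.comp T)) ∧
    FiniteDimensional ℝ (G ⧸ LinearMap.range ((S.comp T : E →L[ℝ] G) : E →ₗ[ℝ] G)) ∧
    (finrank ℝ (LinearMap.ker ((S.comp T : E →L[ℝ] G) : E →ₗ[ℝ] G)) : ℤ) -
        finrank ℝ (G ⧸ LinearMap.range ((S.comp T : E →L[ℝ] G) : E →ₗ[ℝ] G)) =
      ((finrank ℝ (LinearMap.ker (S : F →ₗ[ℝ] G)) : ℤ) - finrank ℝ (G ⧸ LinearMap.range (S : F →ₗ[ℝ] G))) +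
      ((finrank ℝ (LinearMap.ker (T : E →ₗ[ℝ] F)) : ℤ) - finrank ℝ (F ⧸ LinearMap.range (T : E →ₗ[ℝ] F))) := by
  haveI := hTker; haveI := hTcoker; haveI := hSker; haveI := hScoker
  set K : Submodule ℝ F := LinearMap.ker (S : F →ₗ[ℝ] G) with hK
  set R : Submodule ℝ F := LinearMap.range (T : E →ₗ[ℝ] F) with hR
  set W : Submodule ℝ F := R ⊔ K with hW
  -- basic identifications
  have hkerST : LinearMap.ker ((S.comp T : E →L[ℝ] G) : E →ₗ[ℝ] G) = Submodule.comap (T : E →ₗ[ℝ] F) K := by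
    ext x; simp [LinearMap.mem_ker, Submodule.mem_comap, hK]
  have hranST : LinearMap.range ((S.comp T : E →L[ℝ] G) : E →ₗ[ℝ] G) = Submodule.map (S : F →ₗ[ℝ] G) R := by
    ext y; constructor
    · rintro ⟨x, rfl⟩; exact ⟨T x, ⟨x, rfl⟩, rfl⟩
    · rintro ⟨z, ⟨x, rfl⟩, rfl⟩; exact ⟨x, rfl⟩
  ---------------------------------------------------------------
  -- Part 1 : kernel of the composition
  ---------------------------------------------------------------
  set φ : LinearMap.ker ((S.comp T : E →L[ℝ] G) : E →ₗ[ℝ] G) →ₗ[ℝ] F :=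
    (T : E →ₗ[ℝ] F).domRestrict (LinearMap.ker ((S.comp T : E →L[ℝ] G) : E →ₗ[ℝ] G)) with hφ
  have hle : LinearMap.ker (T : E →ₗ[ℝ] F) ≤ LinearMap.ker ((S.comp T : E →L[ℝ] G) : E →ₗ[ℝ] G) := by
    intro x hx
    have hx' : T x = 0 := hx
    simp [LinearMap.mem_ker, hx']
  have hφker : LinearMap.ker φ = Submodule.comap (LinearMap.ker ((S.comp T : E →L[ℝ] G) : E →ₗ[ℝ] G)).subtype
      (LinearMap.ker (T : E →ₗ[ℝ] F)) := by
    rw [hφ, LinearMap.ker_domRestrict]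
  have hφrange : LinearMap.range φ = K ⊓ R := by
    rw [hφ, LinearMap.range_domRestrict, hkerST, Submodule.map_comap_eq, inf_comm]
  have ekerφ : (LinearMap.ker φ) ≃ₗ[ℝ] LinearMap.ker (T : E →ₗ[ℝ] F) := by
    rw [hφker]; exact Submodule.comapSubtypeEquivOfLe hle
  haveI hfinkerφ : FiniteDimensional ℝ (LinearMap.ker φ) := ekerφ.symm.finiteDimensional
  haveI hfinranφ : FiniteDimensional ℝ (LinearMap.range φ) := by
    rw [hφrange]; exact Submodule.finiteDimensional_of_le inf_le_left
  haveI hfinkerST : FiniteDimensional ℝ (LinearMap.ker ((S.comp T : E →L[ℝ] G) : E →ₗ[ℝ] G)) :=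
    fin_of_sub_quot (LinearMap.ker φ) hfinkerφ
      (LinearMap.quotKerEquivRange φ).symm.finiteDimensional
  have hrankker : finrank ℝ (LinearMap.ker ((S.comp T : E →L[ℝ] G) : E →ₗ[ℝ] G)) =
      finrank ℝ (K ⊓ R : Submodule ℝ F) + finrank ℝ (LinearMap.ker (T : E →ₗ[ℝ] F)) := by
    have h1 := LinearMap.finrank_range_add_finrank_ker φ
    rw [hφrange, ekerφ.finrank_eq] at h1
    omega
  ---------------------------------------------------------------
  -- Part 2 : dim K = dim (K ⊓ R) + d  where d = dim (mkQ R '' W)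
  ---------------------------------------------------------------
  set χ : K →ₗ[ℝ] F ⧸ R := R.mkQ.domRestrict K with hχ
  have hχker : LinearMap.ker χ = Submodule.comap K.subtype (K ⊓ R) := by
    rw [hχ, LinearMap.ker_domRestrict, Submodule.ker_mkQ]
    ext x; simp [Submodule.mem_comap, x.2]
  have hmapRbot : Submodule.map R.mkQ R = ⊥ := by
    rw [eq_bot_iff]; rintro y ⟨x, hx, rfl⟩
    simpa [Submodule.mkQ_apply, Submodule.Quotient.mk_eq_zero] using hx
  have hχrange : LinearMap.range χ = Submodule.map R.mkQ W := by
    rw [hχ, LinearMap.range_domRestrict, hW, Submodule.map_sup, hmapRbot, bot_sup_eq]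
  have ekerχ : (LinearMap.ker χ) ≃ₗ[ℝ] (K ⊓ R : Submodule ℝ F) := by
    rw [hχker]; exact Submodule.comapSubtypeEquivOfLe inf_le_left
  have hrankK : finrank ℝ K =
      finrank ℝ (K ⊓ R : Submodule ℝ F) + finrank ℝ (Submodule.map R.mkQ W) := by
    have h1 := LinearMap.finrank_range_add_finrank_ker χ
    rw [hχrange, ekerχ.finrank_eq] at h1
    omega
  ---------------------------------------------------------------
  -- Part 3 : dim (F⧸R) = dim (F⧸W) + d
  ---------------------------------------------------------------
  have hRW : R ≤ W := le_sup_left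
  set ψ : (F ⧸ R) →ₗ[ℝ] F ⧸ W := Submodule.mapQ R W LinearMap.id (by
    simpa [Submodule.comap_id] using hRW) with hψ
  have hψsurj : Function.Surjective ψ := by
    intro y
    obtain ⟨x, rfl⟩ := Submodule.mkQ_surjective W y
    exact ⟨R.mkQ x, by simp [hψ, Submodule.mapQ_apply]⟩
  have hψker : LinearMap.ker ψ = Submodule.map R.mkQ W := by
    ext y
    obtain ⟨x, rfl⟩ := Submodule.mkQ_surjective R y
    constructor
    · intro hy
      have hxW : x ∈ W := by
        simpa [hψ, Submodule.mapQ_apply, Submodule.Quotient.mk_eq_zero] using hy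
      exact ⟨x, hxW, rfl⟩
    · rintro ⟨w, hw, hwx⟩
      have : ψ (R.mkQ w) = 0 := by
        rw [hψ]
        simp only [Submodule.mkQ_apply, Submodule.mapQ_apply, LinearMap.id_coe, id_eq,
          Submodule.Quotient.mk_eq_zero]
        exact hw
      rwa [hwx] at this
  haveI hfinFW : FiniteDimensional ℝ (F ⧸ W) := Module.Finite.of_surjective ψ hψsurj
  have hrankFR : finrank ℝ (F ⧸ R) =
      finrank ℝ (F ⧸ W) + finrank ℝ (Submodule.map R.mkQ W) := by
    have h1 := LinearMap.finrank_range_add_finrank_ker ψ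
    rw [hψker, LinearMap.range_eq_top.mpr hψsurj, finrank_top] at h1
    omega
  ---------------------------------------------------------------
  -- Part 4 : cokernel of the composition
  ---------------------------------------------------------------
  set N : Submodule ℝ G := LinearMap.range (S : F →ₗ[ℝ] G) with hN
  set M : Submodule ℝ G := Submodule.map (S : F →ₗ[ℝ] G) R with hM
  have hMN : M ≤ N := by
    rintro y ⟨x, hx, rfl⟩; exact ⟨x, rfl⟩
  set β : (G ⧸ M) →ₗ[ℝ] G ⧸ N := Submodule.mapQ M N LinearMap.id (by
    simpa [Submodule.comap_id] using hMN) with hβ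
  have hβsurj : Function.Surjective β := by
    intro y
    obtain ⟨x, rfl⟩ := Submodule.mkQ_surjective N y
    exact ⟨M.mkQ x, by simp [hβ, Submodule.mapQ_apply]⟩
  have hβker : LinearMap.ker β = Submodule.map M.mkQ N := by
    ext y
    obtain ⟨x, rfl⟩ := Submodule.mkQ_surjective M y
    constructor
    · intro hy
      have hxN : x ∈ N := by
        simpa [hβ, Submodule.mapQ_apply, Submodule.Quotient.mk_eq_zero] using hy
      exact ⟨x, hxN, rfl⟩
    · rintro ⟨w, hw, hwx⟩
      have : β (M.mkQ w) = 0 := by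
        rw [hβ]
        simp only [Submodule.mkQ_apply, Submodule.mapQ_apply, LinearMap.id_coe, id_eq,
          Submodule.Quotient.mk_eq_zero]
        exact hw
      rwa [hwx] at this
  -- the map γ : F → map M.mkQ N, realizing F ⧸ W ≃ ker β
  set γ : F →ₗ[ℝ] G ⧸ M := M.mkQ.comp (S : F →ₗ[ℝ] G) with hγ
  have hγker : LinearMap.ker γ = W := by
    rw [hγ, LinearMap.ker_comp, Submodule.ker_mkQ, hM, Submodule.comap_map_eq, hW]
  have hγrange : LinearMap.range γ = Submodule.map M.mkQ N := by
    rw [hγ, LinearMap.range_comp, hN]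
  have eFW : (F ⧸ W) ≃ₗ[ℝ] LinearMap.ker β := by
    refine (Submodule.quotEquivOfEq W (LinearMap.ker γ) hγker.symm) ≪≫ₗ
      (LinearMap.quotKerEquivRange γ) ≪≫ₗ (LinearEquiv.ofEq _ _ ?_)
    rw [hγrange, hβker]
  haveI hfinkerβ : FiniteDimensional ℝ (LinearMap.ker β) := eFW.finiteDimensional
  haveI hfinGM : FiniteDimensional ℝ (G ⧸ M) := by
    refine fin_of_sub_quot (LinearMap.ker β) hfinkerβ ?_
    exact ((LinearMap.quotKerEquivRange β) ≪≫ₗ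
      (LinearEquiv.ofEq _ _ (LinearMap.range_eq_top.mpr hβsurj)) ≪≫ₗ
      Submodule.topEquiv).symm.finiteDimensional
  have hrankGM : finrank ℝ (G ⧸ M) = finrank ℝ (G ⧸ N) + finrank ℝ (F ⧸ W) := by
    have h1 := LinearMap.finrank_range_add_finrank_ker β
    rw [hβker, LinearMap.range_eq_top.mpr hβsurj, finrank_top, ← hβker, ← eFW.finrank_eq] at h1
    omega
  haveI hfincoker : FiniteDimensional ℝ (G ⧸ LinearMap.range ((S.comp T : E →L[ℝ] G) : E →ₗ[ℝ] G)) := by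
    rw [hranST]; exact hfinGM
  ---------------------------------------------------------------
  -- Part 5 : closedness of the range of the composition
  ---------------------------------------------------------------
  have hRclosed : IsClosed (R : Set F) := by
    rw [hR]
    exact (LinearMap.coe_range (T : E →ₗ[ℝ] F)) ▸ hTclosed
  have hNclosed : IsClosed (N : Set G) := by
    rw [hN]
    exact (LinearMap.coe_range (S : F →ₗ[ℝ] G)) ▸ hSclosed
  -- W is closed
  have hWclosed : IsClosed (W : Set F) := by
    have hRcc : R.ClosedComplemented :=
      Submodule.ClosedComplemented.of_quotient_finiteDimensional hRclosed
    obtain ⟨f, hf⟩ := hRcc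
    set q : F →L[ℝ] F := ContinuousLinearMap.id ℝ F - R.subtypeL.comp f with hq
    have hqx : ∀ x : F, q x = x - (f x : F) := fun x => rfl
    have hkerq : LinearMap.ker (q : F →ₗ[ℝ] F) = R := by
      apply le_antisymm
      · intro x hx
        have hx' : x - (f x : F) = 0 := hx
        have hxf : x = (f x : F) := sub_eq_zero.mp hx'
        rw [hxf]
        exact (f x).2
      · intro x hx
        show q x = 0
        rw [hqx]
        have h2 : f x = ⟨x, hx⟩ := hf ⟨x, hx⟩
        rw [h2]
        simp
    have hWeq : W = Submodule.comap (q : F →ₗ[ℝ] F)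
        (Submodule.map (q : F →ₗ[ℝ] F) K) := by
      rw [Submodule.comap_map_eq, hkerq, hW, sup_comm]
    haveI : FiniteDimensional ℝ (Submodule.map (q : F →ₗ[ℝ] F) K) := by
      exact Module.Finite.map K (q : F →ₗ[ℝ] F)
    have hmapclosed : IsClosed ((Submodule.map (q : F →ₗ[ℝ] F) K : Submodule ℝ F) : Set F) :=
      Submodule.closed_of_finiteDimensional _
    rw [hWeq]
    exact hmapclosed.preimage q.continuous
  -- the orthogonal complement of K
  set P : Submodule ℝ F := Kᗮ with hP
  have hPclosed : IsClosed (P : Set F) := K.isClosed_orthogonal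
  haveI : CompleteSpace K := FiniteDimensional.complete ℝ K
  have hcompl : IsCompl K P := Submodule.isCompl_orthogonal_of_hasOrthogonalProjection
  haveI : CompleteSpace P := hPclosed.completeSpace_coe
  haveI : CompleteSpace N := hNclosed.completeSpace_coe
  -- the bijection between P and N
  set S₁ : P →L[ℝ] N := (S.comp P.subtypeL).codRestrict N
    (fun x => ⟨(x : F), rfl⟩) with hS₁
  have hS₁x : ∀ x : P, (S₁ x : G) = S (x : F) := fun x => rfl
  have hinj : LinearMap.ker (S₁ : P →ₗ[ℝ] N) = ⊥ := by
    rw [eq_bot_iff]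
    rintro x hx
    have hxK : (x : F) ∈ K := by
      have : S (x : F) = 0 := by
        have := congrArg (Subtype.val) (show S₁ x = 0 from hx)
        simpa [hS₁x] using this
      exact this
    have : (x : F) ∈ K ⊓ P := ⟨hxK, x.2⟩
    rw [hcompl.inf_eq_bot] at this
    rw [Submodule.mem_bot]
    exact Subtype.ext (by simpa using this)
  have hsurj : LinearMap.range (S₁ : P →ₗ[ℝ] N) = ⊤ := by
    rw [eq_top_iff]
    rintro ⟨y, hy⟩ -
    obtain ⟨x, hx⟩ := hy
    have hxKP : x ∈ K ⊔ P := by rw [hcompl.sup_eq_top]; trivial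
    obtain ⟨k, hk, p, hp, rfl⟩ := Submodule.mem_sup.mp hxKP
    refine ⟨⟨p, hp⟩, ?_⟩
    apply Subtype.ext
    have hk0 : S k = 0 := hk
    simp [hS₁x, ← hx, map_add, hk0]
  set e : P ≃L[ℝ] N := ContinuousLinearEquiv.ofBijective S₁ hinj hsurj with he
  -- identify the range of the composition
  have h1 : Submodule.map (S : F →ₗ[ℝ] G) W = M := by
    rw [hW, Submodule.map_sup, hM]
    have : Submodule.map (S : F →ₗ[ℝ] G) K = ⊥ := by
      rw [eq_bot_iff]; rintro y ⟨x, hx, rfl⟩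
      simpa using (show S x = 0 from hx)
    rw [this, sup_bot_eq]
  set V : Submodule ℝ F := W ⊓ P with hV
  have h2 : Submodule.map (S : F →ₗ[ℝ] G) V = Submodule.map (S : F →ₗ[ℝ] G) W := by
    apply le_antisymm (Submodule.map_mono inf_le_left)
    rintro y ⟨w, hw, rfl⟩
    have hwKP : w ∈ K ⊔ P := by rw [hcompl.sup_eq_top]; trivial
    obtain ⟨k, hk, p, hp, rfl⟩ := Submodule.mem_sup.mp hwKP
    have hpW : p ∈ W := by
      have hkW : k ∈ W := (le_sup_right : K ≤ W) hk
      have := W.sub_mem hw hkW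
      simpa using this
    have hk0 : S k = 0 := hk
    exact ⟨p, ⟨hpW, hp⟩, by simp [map_add, hk0]⟩
  have hVclosed : IsClosed ((V : Submodule ℝ F) : Set F) := by
    rw [hV, Submodule.coe_inf]
    exact hWclosed.inter hPclosed
  -- the closedness proof
  have hclosed : IsClosed (Set.range (S.comp T)) := by
    have hset : Set.range (S.comp T) = ((LinearMap.range ((S.comp T : E →L[ℝ] G) : E →ₗ[ℝ] G) : Submodule ℝ G) : Set G) :=
      (LinearMap.coe_range ((S.comp T : E →L[ℝ] G) : E →ₗ[ℝ] G)).symm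
    rw [hset, hranST, ← h1, ← h2]
    have himg : ((Submodule.map (S : F →ₗ[ℝ] G) V : Submodule ℝ G) : Set G) =
        Subtype.val '' (e '' (Subtype.val ⁻¹' (V : Set F) : Set P)) := by
      ext y
      constructor
      · rintro ⟨x, hx, rfl⟩
        have hxP : x ∈ P := hx.2
        refine ⟨S₁ ⟨x, hxP⟩, ⟨⟨x, hxP⟩, hx, ?_⟩, (hS₁x ⟨x, hxP⟩)⟩
        rfl
      · rintro ⟨n, ⟨p, hp, rfl⟩, rfl⟩
        exact ⟨(p : F), hp, (hS₁x p).symm⟩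
    rw [himg]
    have hU : IsClosed (Subtype.val ⁻¹' (V : Set F) : Set P) :=
      hVclosed.preimage continuous_subtype_val
    have he' : IsClosed (e '' (Subtype.val ⁻¹' (V : Set F) : Set P)) := by
      rw [e.image_eq_preimage_symm]
      exact hU.preimage e.symm.continuous
    exact hNclosed.isClosedEmbedding_subtypeVal.isClosedMap _ he'
  ---------------------------------------------------------------
  -- Conclusion
  ---------------------------------------------------------------
  refine ⟨hfinkerST, hclosed, hfincoker, ?_⟩
  have hrankcoker : finrank ℝ (G ⧸ LinearMap.range ((S.comp T : E →L[ℝ] G) : E →ₗ[ℝ] G)) =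
      finrank ℝ (G ⧸ N) + finrank ℝ (F ⧸ W) := by
    rw [hranST]; exact hrankGM
  rw [hrankker, hrankcoker]
  have hKfin : finrank ℝ (LinearMap.ker (S : F →ₗ[ℝ] G)) = finrank ℝ K := rfl
  have hNfin : finrank ℝ (G ⧸ LinearMap.range (S : F →ₗ[ℝ] G)) = finrank ℝ (G ⧸ N) := rfl
  have hRfin : finrank ℝ (F ⧸ LinearMap.range (T : E →ₗ[ℝ] F)) = finrank ℝ (F ⧸ R) := rfl
  rw [hKfin, hNfin, hRfin, hrankK, hrankFR]
  push_cast
  ring
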